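/- Let G be a finite simple graph with maximum degree Δ. Then the edges of G can be properly colored with Δ + 1 colors; equivalently, E(G) can be partitioned into Δ + 1 matchings. -/

import Mathlib

namespace Vizing19

open SimpleGraph List

variable {V : Type*}

/-! ### Pure list lemmas -/

lemma chain'_transfer {R S : V → V → Prop} :
    ∀ {l : List V}, List.Chain' R l →
      (∀ a ∈ l, ∀ b ∈ l.tail, R a b → S a b) → List.Chain' S l
  | [], _, _ => List.isChain_nil
  | [_], _, _ => List.isChain_singleton _
  | a :: b :: l, h, himp => by
    unfold List.Chain' at h ⊢
    rw [List.isChain_cons_cons] at h ⊢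
    refine ⟨himp a (by simp) b (by simp) h.1, chain'_transfer h.2 ?_⟩
    intro p hp q hq hr
    have hq' : q ∈ l := hq
    exact himp p (by simp [hp]) q (by simp [hq']) hr

lemma nodup_unique_pred {u : V} :
    ∀ {p₁ p₂ q₁ q₂ : List V}, (p₁ ++ u :: q₁).Nodup →
      p₁ ++ u :: q₁ = p₂ ++ u :: q₂ → p₁ = p₂ := by
  intro p₁
  induction p₁ with
  | nil =>
    intro p₂ q₁ q₂ hnd h
    cases p₂ with
    | nil => rfl
    | cons b p₂' =>
      exfalso
      simp only [List.nil_append, List.cons_append, List.cons.injEq] at h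
      obtain ⟨rfl, h2⟩ := h
      have : u ∈ q₁ := h2 ▸ (List.mem_append_right _ (List.mem_cons_self))
      simp at hnd; exact hnd.1 this
  | cons a p₁' ih =>
    intro p₂ q₁ q₂ hnd h
    cases p₂ with
    | nil =>
      exfalso
      simp only [List.cons_append, List.nil_append, List.cons.injEq] at h
      obtain ⟨heq, h2⟩ := h
      have hu : u ∈ p₁' ++ u :: q₁ := List.mem_append_right _ (List.mem_cons_self)
      rw [List.cons_append, List.nodup_cons] at hnd
      rw [heq] at hnd
      exact hnd.1 hu
    | cons b p₂' =>
      simp only [List.cons_append, List.cons.injEq] at h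
      obtain ⟨rfl, h2⟩ := h
      rw [List.cons_append, List.nodup_cons] at hnd
      rw [ih hnd.2 h2]

lemma chain'_of_decomp {R : V → V → Prop} {l A B : List V} {a b : V}
    (h : List.Chain' R l) (hd : l = A ++ a :: b :: B) : R a b := by
  subst hd
  have h2 := (List.isChain_append.mp h).2.1
  exact (List.isChain_cons_cons.mp h2).1

/-! ### Walk lemmas: components of max-degree-≤2 graphs -/

lemma path_interior {S : SimpleGraph V} {u v w : V} (p : S.Walk u v) (hp : p.IsPath)
    (hw : w ∈ p.support) (hwu : w ≠ u) (hwv : w ≠ v) :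
    ∃ a b, a ≠ b ∧ a ∈ p.support ∧ b ∈ p.support ∧ S.Adj w a ∧ S.Adj w b := by
  induction p with
  | nil => simp at hw; exact absurd hw hwu
  | @cons u u1 v h q ih =>
    rw [SimpleGraph.Walk.support_cons] at hw
    rcases List.mem_cons.mp hw with rfl | hw'
    · exact absurd rfl hwu
    have hq : q.IsPath := hp.of_cons
    have hunq : u ∉ q.support := ((SimpleGraph.Walk.cons_isPath_iff h q).mp hp).2
    by_cases hwu1 : w = u1
    · subst hwu1
      cases q with
      | nil => exact absurd rfl hwv
      | @cons _ u2 _ h2 q2 =>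
        refine ⟨u, u2, ?_, ?_, ?_, h.symm, h2⟩
        · rintro rfl
          exact hunq (SimpleGraph.Walk.support_cons _ _ ▸
            List.mem_cons.mpr (Or.inr q2.start_mem_support))
        · simp [SimpleGraph.Walk.support_cons]
        · simp [SimpleGraph.Walk.support_cons]
    · obtain ⟨a, b, hab, ha, hb, h1, h2⟩ := ih hq hw' hwu1 hwv
      exact ⟨a, b, hab, by simp [SimpleGraph.Walk.support_cons, ha],
        by simp [SimpleGraph.Walk.support_cons, hb], h1, h2⟩

lemma first_hit {S : SimpleGraph V} {u v : V} (p : S.Walk u v) :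
    ∀ {y : V}, S.Walk y u → y ∉ p.support →
      ∃ w ∈ p.support, ∃ z, z ∉ p.support ∧ S.Adj z w
  | _, SimpleGraph.Walk.nil, hy => absurd p.start_mem_support hy
  | y, SimpleGraph.Walk.cons (v := y1) h q, hy => by
    by_cases h1 : y1 ∈ p.support
    · exact ⟨y1, h1, y, hy, h⟩
    · exact first_hit p q h1

lemma walk_next {S : SimpleGraph V} {u v : V} (p : S.Walk u v) (h : u ≠ v) :
    ∃ w, S.Adj u w ∧ w ∈ p.support := by
  cases p with
  | nil => exact absurd rfl h
  | cons h' q => exact ⟨_, h', by simp⟩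

lemma three_ends [DecidableEq V] {S : SimpleGraph V} {x u v : V} (hxu : x ≠ u) (hxv : x ≠ v) (huv : u ≠ v)
    (h2 : ∀ y a b c : V, S.Adj y a → S.Adj y b → S.Adj y c → a = b ∨ a = c ∨ b = c)
    (h1x : ∀ a b, S.Adj x a → S.Adj x b → a = b)
    (h1u : ∀ a b, S.Adj u a → S.Adj u b → a = b)
    (h1v : ∀ a b, S.Adj v a → S.Adj v b → a = b)
    (hru : S.Reachable x u) (hrv : S.Reachable x v) : False := by
  have hruv : S.Reachable u v := hru.symm.trans hrv
  obtain ⟨q0⟩ := hru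
  obtain ⟨r⟩ := hruv
  obtain ⟨p, hpath⟩ : ∃ p : S.Walk u v, p.IsPath := ⟨r.toPath.1, r.toPath.2⟩
  have hxp : x ∉ p.support := by
    intro hx
    obtain ⟨a, b, hab, _, _, ha, hb⟩ := path_interior p hpath hx hxu hxv
    exact hab (h1x a b ha hb)
  obtain ⟨w, hwp, z, hzp, hzw⟩ := first_hit p q0 hxp
  by_cases hwu : w = u
  · subst hwu
    obtain ⟨u2, h', hu2⟩ := walk_next p huv
    have : z = u2 := h1u z u2 hzw.symm h'
    exact hzp (this ▸ hu2)
  by_cases hwv : w = v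
  · subst hwv
    obtain ⟨u2, h', hu2⟩ := walk_next p.reverse huv.symm
    rw [SimpleGraph.Walk.support_reverse, List.mem_reverse] at hu2
    have : z = u2 := h1v z u2 hzw.symm h'
    exact hzp (this ▸ hu2)
  · obtain ⟨a, b, hab, ha, hb, h1', h2'⟩ := path_interior p hpath hwp hwu hwv
    have hza : z ≠ a := fun h => hzp (h ▸ ha)
    have hzb : z ≠ b := fun h => hzp (h ▸ hb)
    rcases h2 w a b z h1' h2' hzw.symm with h | h | h
    · exact hab h
    · exact hza h.symm
    · exact hzb h.symm

/-! ### Partial edge colorings -/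

section Coloring

variable [Fintype V] [DecidableEq V] (H : SimpleGraph V) [DecidableRel H.Adj] {n : ℕ}

/-- Proper partial coloring: edges sharing a vertex get different colors. -/
def Proper (C : Sym2 V → Option (Fin n)) : Prop :=
  ∀ v a b : V, a ≠ b → ∀ c : Fin n, C s(v, a) = some c → C s(v, b) ≠ some c

/-- Colored edges are edges of `H`. -/
def Supp (C : Sym2 V → Option (Fin n)) : Prop :=
  ∀ e, C e ≠ none → e ∈ H.edgeSet

/-- Color `c` is free at `v`. -/
def freeC (C : Sym2 V → Option (Fin n)) (v : V) (c : Fin n) : Prop :=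
  ∀ u, H.Adj v u → C s(v, u) ≠ some c

variable {H}

lemma exists_free (C : Sym2 V → Option (Fin n)) (v : V) (hn : H.degree v < n) :
    ∃ c : Fin n, freeC H C v c := by
  classical
  set T : Finset (Fin n) :=
    Finset.univ.filter (fun c => ∃ u ∈ H.neighborFinset v, C s(v, u) = some c) with hT
  have hTcard : T.card < n := by
    have h1 : T.image (fun c => (some c : Option (Fin n))) ⊆
        (H.neighborFinset v).image (fun u => C s(v, u)) := by
      intro o ho
      simp only [Finset.mem_image] at ho
      obtain ⟨c, hc, rfl⟩ := ho
      rw [hT, Finset.mem_filter] at hc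
      obtain ⟨-, u, hu, hcu⟩ := hc
      exact Finset.mem_image.mpr ⟨u, hu, hcu⟩
    have h2 : T.card = (T.image (fun c => (some c : Option (Fin n)))).card :=
      (Finset.card_image_of_injective _ (Option.some_injective _)).symm
    calc T.card ≤ ((H.neighborFinset v).image (fun u => C s(v, u))).card :=
          h2 ▸ Finset.card_le_card h1
      _ ≤ (H.neighborFinset v).card := Finset.card_image_le
      _ = H.degree v := H.card_neighborFinset_eq_degree v
      _ < n := hn
  have : ∃ c : Fin n, c ∉ T := by
    by_contra hco
    push_neg at hco
    have : T = Finset.univ := Finset.eq_univ_iff_forall.mpr hco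
    rw [this, Finset.card_univ, Fintype.card_fin] at hTcard
    exact lt_irrefl _ hTcard
  obtain ⟨c, hc⟩ := this
  refine ⟨c, fun u hu hcu => hc ?_⟩
  rw [hT, Finset.mem_filter]
  exact ⟨Finset.mem_univ _, u, (H.mem_neighborFinset v u).mpr hu, hcu⟩

lemma sym2_eq_cases {v a x z : V} (h : s(v, a) = s(x, z)) :
    (v = x ∧ a = z) ∨ (v = z ∧ a = x) := by
  rw [Sym2.eq_iff] at h; tauto

/-- Coloring an uncolored edge with a color free at both ends. -/
lemma color_step {C : Sym2 V → Option (Fin n)} (hC : Proper C) (hS : Supp H C)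
    {x z : V} {c : Fin n} (hxz : H.Adj x z) (hfx : freeC H C x c) (hfz : freeC H C z c) :
    Proper (Function.update C s(x, z) (some c)) ∧
    Supp H (Function.update C s(x, z) (some c)) ∧
    (∀ f, Function.update C s(x, z) (some c) f = none ↔ (C f = none ∧ f ≠ s(x, z))) := by
  classical
  set C' := Function.update C s(x, z) (some c) with hC'
  have hval : ∀ f, C' f = if f = s(x, z) then some c else C f := by
    intro f; rw [hC', Function.update_apply]
  refine ⟨?_, ?_, ?_⟩
  · intro v a b hab d h1 h2
    rw [hval] at h1 h2
    by_cases e1 : s(v, a) = s(x, z) <;> by_cases e2 : s(v, b) = s(x, z)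
    · exact hab (Sym2.congr_right.mp (e1.trans e2.symm))
    · rw [if_pos e1] at h1; rw [if_neg e2] at h2
      have hdc : d = c := by injection h1 with h'; exact h'.symm
      subst hdc
      rcases sym2_eq_cases e1 with ⟨rfl, rfl⟩ | ⟨rfl, rfl⟩
      · have hadj : H.Adj v b := by
          have := hS s(v, b) (by rw [h2]; simp)
          rwa [SimpleGraph.mem_edgeSet] at this
        exact hfx b hadj h2
      · have hadj : H.Adj v b := by
          have := hS s(v, b) (by rw [h2]; simp)
          rwa [SimpleGraph.mem_edgeSet] at this
        exact hfz b hadj h2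
    · rw [if_neg e1] at h1; rw [if_pos e2] at h2
      have hdc : d = c := by injection h2 with h'; exact h'.symm
      subst hdc
      rcases sym2_eq_cases e2 with ⟨rfl, rfl⟩ | ⟨rfl, rfl⟩
      · have hadj : H.Adj v a := by
          have := hS s(v, a) (by rw [h1]; simp)
          rwa [SimpleGraph.mem_edgeSet] at this
        exact hfx a hadj h1
      · have hadj : H.Adj v a := by
          have := hS s(v, a) (by rw [h1]; simp)
          rwa [SimpleGraph.mem_edgeSet] at this
        exact hfz a hadj h1
    · rw [if_neg e1] at h1; rw [if_neg e2] at h2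
      exact hC v a b hab d h1 h2
  · intro f hf
    rw [hval] at hf
    by_cases e : f = s(x, z)
    · rw [e, SimpleGraph.mem_edgeSet]; exact hxz
    · rw [if_neg e] at hf; exact hS f hf
  · intro f
    rw [hval]
    by_cases e : f = s(x, z)
    · simp only [if_pos e]
      constructor
      · intro h; exact absurd h (by simp)
      · rintro ⟨h1, h2⟩; exact absurd e h2
    · simp only [if_neg e]
      exact ⟨fun h => ⟨h, e⟩, fun h => h.1⟩

/-! ### The two-color subgraph and Kempe chain swaps -/

variable (H)

/-- Subgraph of edges colored `α` or `β`. -/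
def colGraph (C : Sym2 V → Option (Fin n)) (α β : Fin n) : SimpleGraph V where
  Adj u v := H.Adj u v ∧ (C s(u, v) = some α ∨ C s(u, v) = some β)
  symm := by
    constructor
    intro u v ⟨h1, h2⟩
    exact ⟨h1.symm, by rwa [Sym2.eq_swap]⟩
  loopless := ⟨fun v h => H.loopless.irrefl v h.1⟩

variable {H}

lemma colGraph_deg2 {C : Sym2 V → Option (Fin n)} (hC : Proper C) (α β : Fin n) :
    ∀ y a b c : V, (colGraph H C α β).Adj y a → (colGraph H C α β).Adj y b →
      (colGraph H C α β).Adj y c → a = b ∨ a = c ∨ b = c := by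
  intro y a b c ha hb hc
  have key : ∀ p q : V, C s(y, p) = C s(y, q) → C s(y, p) = some α ∨ C s(y, p) = some β →
      p = q := by
    intro p q hpq hcol
    by_contra hne
    rcases hcol with h | h
    · exact hC y p q hne α h (hpq ▸ h)
    · exact hC y p q hne β h (hpq ▸ h)
  rcases ha.2 with h1 | h1 <;> rcases hb.2 with h2 | h2 <;> rcases hc.2 with h3 | h3
  · exact Or.inl (key a b (h1.trans h2.symm) (Or.inl h1))
  · exact Or.inl (key a b (h1.trans h2.symm) (Or.inl h1))
  · exact Or.inr (Or.inl (key a c (h1.trans h3.symm) (Or.inl h1)))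
  · exact Or.inr (Or.inr (key b c (h2.trans h3.symm) (Or.inr h2)))
  · exact Or.inr (Or.inr (key b c (h2.trans h3.symm) (Or.inl h2)))
  · exact Or.inr (Or.inl (key a c (h1.trans h3.symm) (Or.inr h1)))
  · exact Or.inl (key a b (h1.trans h2.symm) (Or.inr h1))
  · exact Or.inl (key a b (h1.trans h2.symm) (Or.inr h1))

lemma colGraph_deg1 {C : Sym2 V → Option (Fin n)} (hC : Proper C) {α β : Fin n} {y : V}
    (hfree : freeC H C y α ∨ freeC H C y β) :
    ∀ a b, (colGraph H C α β).Adj y a → (colGraph H C α β).Adj y b → a = b := by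
  intro a b ha hb
  have key : ∀ p q : V, C s(y, p) = C s(y, q) → C s(y, p) = some α ∨ C s(y, p) = some β →
      p = q := by
    intro p q hpq hcol
    by_contra hne
    rcases hcol with h | h
    · exact hC y p q hne α h (hpq ▸ h)
    · exact hC y p q hne β h (hpq ▸ h)
  rcases hfree with hf | hf
  · have h1 : C s(y, a) = some β := ha.2.resolve_left (hf a ha.1)
    have h2 : C s(y, b) = some β := hb.2.resolve_left (hf b hb.1)
    exact key a b (h1.trans h2.symm) (Or.inr h1)
  · have h1 : C s(y, a) = some α := ha.2.resolve_right (hf a ha.1)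
    have h2 : C s(y, b) = some α := hb.2.resolve_right (hf b hb.1)
    exact key a b (h1.trans h2.symm) (Or.inl h1)

variable (H)

open Classical in
/-- Swap colors `α`/`β` on the connected component of `x` in the two-color subgraph. -/
noncomputable def swapC (C : Sym2 V → Option (Fin n)) (α β : Fin n) (x : V) :
    Sym2 V → Option (Fin n) :=
  fun e =>
    if ∃ v ∈ e, (colGraph H C α β).Reachable x v then
      (if C e = some α then some β else if C e = some β then some α else C e)
    else C e

variable {H}

lemma sigma_def (C : Sym2 V → Option (Fin n)) (α β : Fin n) (x : V) (e : Sym2 V) :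
    swapC H C α β x e = C e ∨
    ((∃ v ∈ e, (colGraph H C α β).Reachable x v) ∧
      swapC H C α β x e =
        (if C e = some α then some β else if C e = some β then some α else C e)) := by
  classical
  rw [swapC]
  split
  · right; constructor; assumption; rfl
  · left; rfl
lemma colGraph_adj {C : Sym2 V → Option (Fin n)} (hS : Supp H C) {α β : Fin n} {u w : V}
    (h : C s(u, w) = some α ∨ C s(u, w) = some β) : (colGraph H C α β).Adj u w := by
  have hmem : s(u, w) ∈ H.edgeSet := hS _ (by rcases h with h | h <;> rw [h] <;> simp)
  exact ⟨(SimpleGraph.mem_edgeSet H).mp hmem, h⟩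

lemma reach_extend {C : Sym2 V → Option (Fin n)} (hS : Supp H C) {α β : Fin n} {x u w : V}
    (h : C s(u, w) = some α ∨ C s(u, w) = some β)
    (hr : (colGraph H C α β).Reachable x u) : (colGraph H C α β).Reachable x w :=
  hr.trans (colGraph_adj hS h).reachable

/-- The pure color swap on `Option (Fin n)`. -/
def sigma (α β : Fin n) (o : Option (Fin n)) : Option (Fin n) :=
  if o = some α then some β else if o = some β then some α else o

lemma sigma_none (α β : Fin n) : sigma α β none = none := by simp [sigma]

lemma sigma_invol (α β : Fin n) (o : Option (Fin n)) : sigma α β (sigma α β o) = o := by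
  unfold sigma
  split_ifs <;> simp_all

lemma sigma_inj (α β : Fin n) {o1 o2 : Option (Fin n)} (h : sigma α β o1 = sigma α β o2) :
    o1 = o2 := by
  have := congrArg (sigma α β) h
  rwa [sigma_invol, sigma_invol] at this

lemma sigma_id_of (α β : Fin n) {o : Option (Fin n)} (h1 : o ≠ some α) (h2 : o ≠ some β) :
    sigma α β o = o := by
  unfold sigma; rw [if_neg h1, if_neg h2]

lemma sigma_mem {α β : Fin n} {o : Option (Fin n)}
    (h : sigma α β o = some α ∨ sigma α β o = some β) : o = some α ∨ o = some β := by
  by_contra hc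
  push_neg at hc
  rw [sigma_id_of α β hc.1 hc.2] at h
  exact absurd h (by push_neg; exact hc)


lemma swap_cond_true {C : Sym2 V → Option (Fin n)} {α β : Fin n} {x : V} {e : Sym2 V}
    (h : ∃ v ∈ e, (colGraph H C α β).Reachable x v) :
    swapC H C α β x e =
      (if C e = some α then some β else if C e = some β then some α else C e) := by
  classical
  rw [swapC]
  split
  · rfl
  · exact absurd h (by assumption)

lemma swap_other {C : Sym2 V → Option (Fin n)} {α β : Fin n} {x : V} {e : Sym2 V}
    (h1 : C e ≠ some α) (h2 : C e ≠ some β) : swapC H C α β x e = C e := by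
  rcases sigma_def (H := H) C α β x e with h | ⟨-, h⟩
  · exact h
  · rw [h, if_neg h1, if_neg h2]

lemma swap_eval (C : Sym2 V → Option (Fin n)) (α β : Fin n) (x : V) (e : Sym2 V) :
    (swapC H C α β x e = sigma α β (C e) ∧ (∃ v ∈ e, (colGraph H C α β).Reachable x v)) ∨
    (swapC H C α β x e = C e ∧ ¬(∃ v ∈ e, (colGraph H C α β).Reachable x v)) := by
  classical
  rw [swapC]
  split
  · left; exact ⟨rfl, by assumption⟩
  · right; exact ⟨rfl, by assumption⟩

/-- For an `α/β`-colored edge, the swap condition is equivalent at both endpoints. -/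
lemma cond_coherent {C : Sym2 V → Option (Fin n)} (hS : Supp H C) {α β : Fin n} {x v a : V}
    (hcol : C s(v, a) = some α ∨ C s(v, a) = some β) :
    (∃ w ∈ s(v, a), (colGraph H C α β).Reachable x w) ↔ (colGraph H C α β).Reachable x v := by
  constructor
  · rintro ⟨w, hw, hr⟩
    rcases Sym2.mem_iff.mp hw with rfl | rfl
    · exact hr
    · exact reach_extend hS (by rwa [Sym2.eq_swap]) hr
  · intro hr
    exact ⟨v, Sym2.mem_mk_left v a, hr⟩

lemma swap_none (C : Sym2 V → Option (Fin n)) (α β : Fin n) (x : V) (e : Sym2 V) :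
    swapC H C α β x e = none ↔ C e = none := by
  rcases swap_eval (H := H) C α β x e with ⟨h, -⟩ | ⟨h, -⟩
  · rw [h]
    constructor
    · intro h'
      by_contra hc
      obtain ⟨c, hc⟩ := Option.ne_none_iff_exists'.mp hc
      rw [hc] at h'
      unfold sigma at h'
      split_ifs at h' <;> simp_all
    · intro h'; rw [h', sigma_none]
  · rw [h]

lemma swap_supp {C : Sym2 V → Option (Fin n)} (hS : Supp H C) (α β : Fin n) (x : V) :
    Supp H (swapC H C α β x) := by
  intro e he
  apply hS
  intro hc
  rw [(swap_none C α β x e).mpr hc] at he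
  exact he rfl

lemma swap_proper {C : Sym2 V → Option (Fin n)} (hC : Proper C) (hS : Supp H C)
    (α β : Fin n) (x : V) : Proper (swapC H C α β x) := by
  intro v a b hab d h1 h2
  rcases swap_eval (H := H) C α β x s(v, a) with ⟨ha, hca⟩ | ⟨ha, hca⟩ <;>
    rcases swap_eval (H := H) C α β x s(v, b) with ⟨hb, hcb⟩ | ⟨hb, hcb⟩
  · -- both swapped
    rw [ha] at h1; rw [hb] at h2
    have heq : C s(v, a) = C s(v, b) := sigma_inj α β (h1.trans h2.symm)
    have : C s(v, a) ≠ none := by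
      intro hn; rw [hn, sigma_none] at h1; exact absurd h1 (by simp)
    obtain ⟨c', hc'⟩ := Option.ne_none_iff_exists'.mp this
    exact hC v a b hab c' hc' (heq ▸ hc')
  · -- a swapped, b not
    rw [ha] at h1; rw [hb] at h2
    by_cases hmem : C s(v, a) = some α ∨ C s(v, a) = some β
    · have hd : (some d : Option (Fin n)) = some α ∨ (some d : Option (Fin n)) = some β := by
        rcases hmem with h | h
        · rw [← h1]; unfold sigma; rw [h]; simp
        · rw [← h1]; unfold sigma; rw [h]
          by_cases hba : β = α
          · subst hba; simp
          · rw [if_neg (fun hh => hba (by injection hh)), if_pos rfl]; simp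
      have hcolb : C s(v, b) = some α ∨ C s(v, b) = some β := by rw [h2]; exact hd
      have hrv : (colGraph H C α β).Reachable x v := (cond_coherent hS hmem).mp hca
      exact hcb ((cond_coherent hS hcolb).mpr hrv)
    · push_neg at hmem
      rw [sigma_id_of α β hmem.1 hmem.2] at h1
      exact hC v a b hab d h1 h2
  · -- b swapped, a not
    rw [ha] at h1; rw [hb] at h2
    by_cases hmem : C s(v, b) = some α ∨ C s(v, b) = some β
    · have hd : (some d : Option (Fin n)) = some α ∨ (some d : Option (Fin n)) = some β := by
        rcases hmem with h | h
        · rw [← h2]; unfold sigma; rw [h]; simp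
        · rw [← h2]; unfold sigma; rw [h]
          by_cases hba : β = α
          · subst hba; simp
          · rw [if_neg (fun hh => hba (by injection hh)), if_pos rfl]; simp
      have hcola : C s(v, a) = some α ∨ C s(v, a) = some β := by rw [h1]; exact hd
      have hrv : (colGraph H C α β).Reachable x v := (cond_coherent hS hmem).mp hcb
      exact hca ((cond_coherent hS hcola).mpr hrv)
    · push_neg at hmem
      rw [sigma_id_of α β hmem.1 hmem.2] at h2
      exact hC v a b hab d h1 h2
  · rw [ha] at h1; rw [hb] at h2
    exact hC v a b hab d h1 h2

lemma swap_free_x {C : Sym2 V → Option (Fin n)} {α β : Fin n} (hab : α ≠ β) {x : V}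
    (hf : freeC H C x α) : freeC H (swapC H C α β x) x β := by
  intro u hu hc
  have hcond : ∃ w ∈ s(x, u), (colGraph H C α β).Reachable x w :=
    ⟨x, Sym2.mem_mk_left x u, SimpleGraph.Reachable.refl x⟩
  rw [swap_cond_true (H := H) hcond] at hc
  by_cases h1 : C s(x, u) = some α
  · exact hf u hu h1
  · rw [if_neg h1] at hc
    by_cases h2 : C s(x, u) = some β
    · rw [if_pos h2] at hc
      exact hab (by injection hc)
    · rw [if_neg h2] at hc
      exact h2 hc

lemma swap_free_far {C : Sym2 V → Option (Fin n)} (hS : Supp H C) {α β : Fin n} {x z : V}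
    (hnr : ¬(colGraph H C α β).Reachable x z) {γ : Fin n} (hf : freeC H C z γ) :
    freeC H (swapC H C α β x) z γ := by
  intro u hu hc
  have heq : swapC H C α β x s(z, u) = C s(z, u) := by
    by_cases hmem : C s(z, u) = some α ∨ C s(z, u) = some β
    · rcases swap_eval (H := H) C α β x s(z, u) with ⟨h, hcond⟩ | ⟨h, -⟩
      · exact absurd ((cond_coherent hS hmem).mp hcond) hnr
      · exact h
    · push_neg at hmem
      exact swap_other hmem.1 hmem.2
  rw [heq] at hc
  exact hf u hu hc

/-! ### Fans and rotation -/

variable (H)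

/-- A Vizing fan at `x`: a list of distinct neighbors, the first edge uncolored,
and each subsequent edge's color free at the previous vertex. -/
def IsFan (C : Sym2 V → Option (Fin n)) (x : V) (L : List V) : Prop :=
  L ≠ [] ∧ L.Nodup ∧ (∀ z ∈ L, H.Adj x z) ∧ (∀ y ∈ L.head?, C s(x, y) = none) ∧
  List.Chain' (fun a b => ∃ c, C s(x, b) = some c ∧ freeC H C a c) L

variable {H}

/-- Rotate the fan: shift each fan edge's color to the previous fan edge. -/
def rot (C : Sym2 V → Option (Fin n)) (x : V) : List V → Sym2 V → Option (Fin n)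
  | [] => C
  | [_] => C
  | z0 :: z1 :: M =>
    rot (Function.update (Function.update C s(x, z0) (C s(x, z1))) s(x, z1) none) x (z1 :: M)

lemma sym2_xeq {x a b : V} : s(x, a) = s(x, b) ↔ a = b := Sym2.congr_right

theorem rot_spec {x : V} :
    ∀ (L : List V) (C : Sym2 V → Option (Fin n)), Proper C → Supp H C →
      IsFan H C x L → ∀ y t, L.head? = some y → L.getLast? = some t →
      Proper (rot C x L) ∧ Supp H (rot C x L) ∧
      (∀ f, rot C x L f = none ↔ ((C f = none ∧ f ≠ s(x, y)) ∨ f = s(x, t))) ∧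
      (∀ c, (∃ u, H.Adj x u ∧ rot C x L s(x, u) = some c) ↔
        (∃ u, H.Adj x u ∧ C s(x, u) = some c)) ∧
      (∀ f, (∀ z ∈ L, f ≠ s(x, z)) → rot C x L f = C f) ∧
      (∀ A a b B, L = A ++ a :: b :: B → rot C x L s(x, a) = C s(x, b)) := by
  intro L
  induction L with
  | nil => intro C _ _ _ y t hy _; exact absurd hy (by simp)
  | cons z0 M ihM =>
    intro C hC hS hfan y t hy ht
    have hy0 : z0 = y := by simpa using hy
    subst hy0
    obtain ⟨-, hnd, hadj, hhead, hchain⟩ := hfan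
    have hhead0 : C s(x, z0) = none := hhead z0 rfl
    cases M with
    | nil =>
      have ht0 : z0 = t := by simpa using ht
      subst ht0
      have hrot : rot C x [z0] = C := rfl
      rw [hrot]
      refine ⟨hC, hS, ?_, fun c => Iff.rfl, fun f _ => rfl, ?_⟩
      · intro f
        constructor
        · intro hf
          by_cases hfe : f = s(x, z0)
          · exact Or.inr hfe
          · exact Or.inl ⟨hf, hfe⟩
        · rintro (⟨hf, -⟩ | rfl)
          · exact hf
          · exact hhead0
      · intro A a b B hdec
        exfalso
        have := congrArg List.length hdec
        simp at this
        omega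
    | cons z1 M' =>
      -- step case
      obtain ⟨c1, hc1, hfree1⟩ : ∃ c, C s(x, z1) = some c ∧ freeC H C z0 c :=
        (List.isChain_cons_cons.mp hchain).1
      have hne01 : z0 ≠ z1 := by
        intro h; rw [List.nodup_cons] at hnd; exact hnd.1 (h ▸ List.mem_cons_self)
      have hadj0 : H.Adj x z0 := hadj z0 (by simp)
      have hadj1 : H.Adj x z1 := hadj z1 (by simp)
      have hz0nm : z0 ∉ z1 :: M' := (List.nodup_cons.mp hnd).1
      have hz1nm : z1 ∉ M' := (List.nodup_cons.mp (List.nodup_cons.mp hnd).2).1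
      set C' : Sym2 V → Option (Fin n) :=
        Function.update (Function.update C s(x, z0) (C s(x, z1))) s(x, z1) none with hC'def
      have hval : ∀ f, C' f =
          if f = s(x, z1) then none else if f = s(x, z0) then some c1 else C f := by
        intro f
        rw [hC'def, Function.update_apply, Function.update_apply, hc1]
      have hrot : rot C x (z0 :: z1 :: M') = rot C' x (z1 :: M') := by
        rw [rot]
      -- C' is a proper coloring with support in H
      have hC' : Proper C' := by
        intro v a b hab d h1 h2
        rw [hval] at h1 h2
        by_cases e1 : s(v, a) = s(x, z1)
        · rw [if_pos e1] at h1; exact absurd h1 (by simp)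
        by_cases e2 : s(v, b) = s(x, z1)
        · rw [if_pos e2] at h2; exact absurd h2 (by simp)
        rw [if_neg e1] at h1; rw [if_neg e2] at h2
        by_cases e10 : s(v, a) = s(x, z0)
        · rw [if_pos e10] at h1
          have hd : c1 = d := Option.some.inj h1
          subst hd
          have e20 : s(v, b) ≠ s(x, z0) := fun h => hab (sym2_xeq.mp (e10.trans h.symm))
          rw [if_neg e20] at h2
          rcases sym2_eq_cases e10 with ⟨rfl, rfl⟩ | ⟨rfl, rfl⟩
          · -- v = x, a = z0
            have hbz1 : b ≠ z1 := fun h => e2 (sym2_xeq.mpr h)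
            exact hC v b z1 hbz1 c1 h2 hc1
          · -- v = z0, a = x
            have hadjb : H.Adj v b := by
              have := hS s(v, b) (by rw [h2]; simp)
              rwa [SimpleGraph.mem_edgeSet] at this
            exact hfree1 b hadjb h2
        by_cases e20 : s(v, b) = s(x, z0)
        · rw [if_pos e20] at h2
          have hd : c1 = d := Option.some.inj h2
          subst hd
          rw [if_neg e10] at h1
          rcases sym2_eq_cases e20 with ⟨rfl, rfl⟩ | ⟨rfl, rfl⟩
          · have haz1 : a ≠ z1 := fun h => e1 (sym2_xeq.mpr h)
            exact hC v a z1 haz1 c1 h1 hc1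
          · have hadja : H.Adj v a := by
              have := hS s(v, a) (by rw [h1]; simp)
              rwa [SimpleGraph.mem_edgeSet] at this
            exact hfree1 a hadja h1
        · rw [if_neg e10] at h1; rw [if_neg e20] at h2
          exact hC v a b hab d h1 h2
      have hS' : Supp H C' := by
        intro f hf
        rw [hval] at hf
        by_cases e1 : f = s(x, z1)
        · rw [if_pos e1] at hf; exact absurd rfl hf
        by_cases e0 : f = s(x, z0)
        · rw [e0, SimpleGraph.mem_edgeSet]; exact hadj0
        · rw [if_neg e1, if_neg e0] at hf; exact hS f hf
      have hxnotin : ∀ z ∈ z0 :: z1 :: M', z ≠ x := fun z hz => (hadj z hz).ne'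
      have hfan' : IsFan H C' x (z1 :: M') := by
        refine ⟨List.cons_ne_nil _ _, (List.nodup_cons.mp hnd).2,
          fun z hz => hadj z (List.mem_cons_of_mem _ hz), ?_, ?_⟩
        · intro y' hy'
          have : y' = z1 := by simpa using hy'.symm
          subst this
          rw [hval, if_pos rfl]
        · refine chain'_transfer hchain.tail ?_
          rintro a ha b hb ⟨c, hcb, hfc⟩
          have hbM : b ∈ M' := hb
          have hbz0 : b ≠ z0 := fun h => hz0nm (h ▸ List.mem_cons_of_mem _ hbM)
          have hbz1 : b ≠ z1 := fun h => hz1nm (h ▸ hbM)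
          have hax : a ≠ x := hxnotin a (List.mem_cons_of_mem _ ha)
          have haz0 : a ≠ z0 := fun h => hz0nm (h ▸ ha)
          refine ⟨c, ?_, ?_⟩
          · rw [hval, if_neg (fun h => hbz1 (sym2_xeq.mp h)),
              if_neg (fun h => hbz0 (sym2_xeq.mp h))]
            exact hcb
          · intro u hu hcu
            rw [hval] at hcu
            by_cases e1 : s(a, u) = s(x, z1)
            · rw [if_pos e1] at hcu; exact absurd hcu (by simp)
            by_cases e0 : s(a, u) = s(x, z0)
            · rcases sym2_eq_cases e0 with ⟨rfl, -⟩ | ⟨rfl, -⟩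
              · exact hax rfl
              · exact haz0 rfl
            · rw [if_neg e1, if_neg e0] at hcu
              exact hfc u hu hcu
      have ht' : (z1 :: M').getLast? = some t := by
        rwa [List.getLast?_cons_cons] at ht
      obtain ⟨s1, s2, s3, s4, s5, s6⟩ := ihM C' hC' hS' hfan' z1 t rfl ht'
      rw [hrot]
      refine ⟨s1, s2, ?_, ?_, ?_, ?_⟩
      · -- uncolored-set description
        intro f
        rw [s3 f]
        constructor
        · rintro (⟨hnone, hne1⟩ | rfl)
          · rw [hval] at hnone
            rw [if_neg hne1] at hnone
            by_cases e0 : f = s(x, z0)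
            · rw [if_pos e0] at hnone; exact absurd hnone (by simp)
            · rw [if_neg e0] at hnone; exact Or.inl ⟨hnone, e0⟩
          · exact Or.inr rfl
        · rintro (⟨hnone, hne0⟩ | rfl)
          · have hne1 : f ≠ s(x, z1) := by
              intro h; rw [h, hc1] at hnone; exact absurd hnone (by simp)
            refine Or.inl ⟨?_, hne1⟩
            rw [hval, if_neg hne1, if_neg hne0]
            exact hnone
          · exact Or.inr rfl
      · -- colors used at x unchanged
        intro c
        rw [s4 c]
        constructor
        · rintro ⟨u, hu, hcu⟩
          rw [hval] at hcu
          by_cases e1 : s(x, u) = s(x, z1)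
          · rw [if_pos e1] at hcu; exact absurd hcu (by simp)
          by_cases e0 : s(x, u) = s(x, z0)
          · rw [if_neg e1, if_pos e0] at hcu
            have hcc : c1 = c := Option.some.inj hcu
            subst hcc
            exact ⟨z1, hadj1, hc1⟩
          · rw [if_neg e1, if_neg e0] at hcu
            exact ⟨u, hu, hcu⟩
        · rintro ⟨u, hu, hcu⟩
          by_cases e1 : u = z1
          · subst e1
            rw [hc1] at hcu
            have hcc : c1 = c := Option.some.inj hcu
            subst hcc
            refine ⟨z0, hadj0, ?_⟩
            rw [hval, if_neg (fun h : s(x, z0) = s(x, u) => hne01 (sym2_xeq.mp h)),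
              if_pos rfl]
          by_cases e0 : u = z0
          · subst e0
            rw [hhead0] at hcu
            exact absurd hcu (by simp)
          · refine ⟨u, hu, ?_⟩
            rw [hval, if_neg (fun h => e1 (sym2_xeq.mp h)),
              if_neg (fun h => e0 (sym2_xeq.mp h))]
            exact hcu
      · -- edges away from the fan unchanged
        intro f hf
        rw [s5 f (fun z hz => hf z (List.mem_cons_of_mem _ hz)), hval,
          if_neg (hf z1 (by simp)), if_neg (hf z0 (by simp))]
      · -- consecutive pairs
        intro A a b B hdec
        cases A with
        | nil =>
          simp only [List.nil_append, List.cons.injEq] at hdec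
          obtain ⟨rfl, rfl, rfl⟩ := hdec
          have h5 : rot C' x (z1 :: M') s(x, z0) = C' s(x, z0) := by
            apply s5
            intro z hz h
            have hzz : z0 = z := sym2_xeq.mp h
            subst hzz
            exact hz0nm hz
          rw [h5, hval, if_neg (fun h : s(x, z0) = s(x, z1) => hne01 (sym2_xeq.mp h)),
            if_pos rfl, hc1]
        | cons a0 A' =>
          simp only [List.cons_append, List.cons.injEq] at hdec
          obtain ⟨rfl, hdec⟩ := hdec
          have hbM : b ∈ M' := by
            cases A' with
            | nil =>
              simp only [List.nil_append, List.cons.injEq] at hdec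
              obtain ⟨rfl, rfl⟩ := hdec
              exact List.mem_cons_self
            | cons a1 A'' =>
              simp only [List.cons_append, List.cons.injEq] at hdec
              obtain ⟨rfl, hdec⟩ := hdec
              rw [hdec]
              exact List.mem_append_right _ (by simp)
          have hbne1 : s(x, b) ≠ s(x, z1) := by
            intro h
            have hzz : b = z1 := sym2_xeq.mp h
            subst hzz
            exact hz1nm hbM
          have hbne0 : s(x, b) ≠ s(x, z0) := by
            intro h
            have hzz : b = z0 := sym2_xeq.mp h
            subst hzz
            exact hz0nm (List.mem_cons_of_mem _ hbM)
          rw [s6 A' a b B hdec, hval, if_neg hbne1, if_neg hbne0]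

/-! ### Auxiliary lemmas for fans -/

lemma getLast?_mem {l : List V} {a : V} (h : l.getLast? = some a) : a ∈ l := by
  have := List.dropLast_append_getLast? a h
  rw [← this]; simp

lemma reach_transfer {G G' : SimpleGraph V} {a b : V}
    (hsub : ∀ u v, G'.Adj u v → G.Adj u v ∨ s(u, v) = s(a, b)) (hab : G.Reachable a b) :
    ∀ {u v : V}, G'.Walk u v → G.Reachable u v
  | _, _, SimpleGraph.Walk.nil => SimpleGraph.Reachable.refl _
  | u, v, SimpleGraph.Walk.cons (v := u1) h q => by
    have ih : G.Reachable u1 v := reach_transfer hsub hab q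
    rcases hsub _ _ h with h' | h'
    · exact h'.reachable.trans ih
    · rcases sym2_eq_cases h' with ⟨rfl, rfl⟩ | ⟨rfl, rfl⟩
      · exact hab.trans ih
      · exact hab.symm.trans ih

lemma fan_colored {C : Sym2 V → Option (Fin n)} {x y z : V} {L : List V}
    (hfan : IsFan H C x L) (hhd : L.head? = some y) (hz : z ∈ L) (hne : z ≠ y) :
    ∃ c, C s(x, z) = some c := by
  obtain ⟨A, B, hdec⟩ := List.append_of_mem hz
  cases A with
  | nil =>
    exfalso
    rw [hdec] at hhd
    simp at hhd
    exact hne hhd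
  | cons a A' =>
    have hAne : a :: A' ≠ [] := List.cons_ne_nil _ _
    obtain ⟨w, hw⟩ : ∃ w, (a :: A').getLast? = some w :=
      ⟨_, List.getLast?_eq_getLast hAne⟩
    have hsplit : (a :: A').dropLast ++ [w] = a :: A' := List.dropLast_append_getLast? w hw
    have hdec2 : L = (a :: A').dropLast ++ w :: z :: B := by
      rw [hdec]
      calc a :: A' ++ z :: B = ((a :: A').dropLast ++ [w]) ++ z :: B := by rw [hsplit]
        _ = (a :: A').dropLast ++ w :: z :: B := by
            rw [List.append_assoc, List.singleton_append]
    obtain ⟨c, hc, -⟩ := chain'_of_decomp hfan.2.2.2.2 hdec2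
    exact ⟨c, hc⟩

/-- The greedy fan construction: either we find a fan whose terminal free color is also
free at `x`, or the terminal free color already appears on a fan edge. -/
lemma fan_grow (hn : ∀ v : V, H.degree v < n) {C : Sym2 V → Option (Fin n)}
    (hC : Proper C) {x y : V} (hxy : H.Adj x y) (hnone : C s(x, y) = none) :
    (∃ L t c, IsFan H C x L ∧ L.head? = some y ∧ L.getLast? = some t ∧
       freeC H C t c ∧ freeC H C x c) ∨
    (∃ L t u' β A B, IsFan H C x L ∧ L.head? = some y ∧ L.getLast? = some t ∧
       L = A ++ u' :: B ∧ A ≠ [] ∧ C s(x, u') = some β ∧ freeC H C t β) := by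
  classical
  suffices h : ∀ (m : ℕ) (L : List V), IsFan H C x L → L.head? = some y →
      ((H.neighborFinset x).filter (fun v => v ∉ L)).card ≤ m →
      (∃ L t c, IsFan H C x L ∧ L.head? = some y ∧ L.getLast? = some t ∧
         freeC H C t c ∧ freeC H C x c) ∨
      (∃ L t u' β A B, IsFan H C x L ∧ L.head? = some y ∧ L.getLast? = some t ∧
         L = A ++ u' :: B ∧ A ≠ [] ∧ C s(x, u') = some β ∧ freeC H C t β) by
    refine h ((H.neighborFinset x).filter (fun v => v ∉ [y])).card [y] ?_ rfl le_rfl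
    exact ⟨List.cons_ne_nil _ _, List.nodup_singleton _, by simpa using hxy,
      by simpa using hnone, List.isChain_singleton _⟩
  intro m
  induction m using Nat.strong_induction_on with
  | _ m ihm =>
    intro L hfan hhd hcard
    have hLne : L ≠ [] := hfan.1
    set t := L.getLast hLne with htdef
    have hlast : L.getLast? = some t := List.getLast?_eq_getLast hLne
    have htL : t ∈ L := getLast?_mem hlast
    obtain ⟨β, hβ⟩ := exists_free C t (hn t)
    by_cases hfx : freeC H C x β
    · exact Or.inl ⟨L, t, β, hfan, hhd, hlast, hβ, hfx⟩
    · have hused : ∃ u, H.Adj x u ∧ C s(x, u) = some β := by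
        unfold freeC at hfx
        push_neg at hfx
        obtain ⟨u, hu1, hu2⟩ := hfx
        exact ⟨u, hu1, hu2⟩
      obtain ⟨u, hadju, huβ⟩ := hused
      by_cases hmem : u ∈ L
      · obtain ⟨A, B, hdec⟩ := List.append_of_mem hmem
        have hAne : A ≠ [] := by
          rintro rfl
          rw [hdec] at hhd
          simp at hhd
          rw [← hhd, huβ] at hnone
          exact absurd hnone (by simp)
        exact Or.inr ⟨L, t, u, β, A, B, hfan, hhd, hlast, hdec, hAne, huβ, hβ⟩
      · -- extend the fan
        obtain ⟨-, hnd, hadj, -, hchain⟩ := hfan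
        have hfan' : IsFan H C x (L ++ [u]) := by
          refine ⟨by simp, ?_, ?_, ?_, ?_⟩
          · rw [List.nodup_append]
            exact ⟨hnd, List.nodup_singleton _, by simpa using (fun a ha h => hmem (h ▸ ha) : ∀ a ∈ L, ¬a = u)⟩
          · intro z hz
            rcases List.mem_append.mp hz with h | h
            · exact hadj z h
            · simp at h; subst h; exact hadju
          · intro y' hy'
            have : (L ++ [u]).head? = some y := by
              cases L with
              | nil => exact absurd rfl hLne
              | cons a M => simpa using hhd
            rw [this] at hy'
            have hyy : y = y' := by simpa using hy'
            subst hyy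
            cases L with
            | nil => exact absurd rfl hLne
            | cons a M =>
              have : a = y := by simpa using hhd
              subst this
              simpa using hnone
          · refine List.IsChain.append hchain (List.isChain_singleton _) ?_
            intro a ha b hb
            rw [hlast] at ha
            have ha' : a = t := by simpa using ha.symm
            have hb' : b = u := by simpa using hb.symm
            subst ha'; subst hb'
            exact ⟨β, huβ, hβ⟩
        have hhd' : (L ++ [u]).head? = some y := by
          cases L with
          | nil => exact absurd rfl hLne
          | cons a M => simpa using hhd
        have hlt : ((H.neighborFinset x).filter (fun v => v ∉ L ++ [u])).card <
            ((H.neighborFinset x).filter (fun v => v ∉ L)).card := by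
          apply Finset.card_lt_card
          constructor
          · intro v hv
            rw [Finset.mem_filter] at hv ⊢
            refine ⟨hv.1, fun hvL => hv.2 ?_⟩
            exact List.mem_append.mpr (Or.inl hvL)
          · intro hsub
            have hu1 : u ∈ (H.neighborFinset x).filter (fun v => v ∉ L) := by
              rw [Finset.mem_filter]
              exact ⟨(H.mem_neighborFinset x u).mpr hadju, hmem⟩
            have hu2 := hsub hu1
            rw [Finset.mem_filter] at hu2
            exact hu2.2 (by simp)
        exact ihm _ (lt_of_lt_of_le hlt hcard) (L ++ [u]) hfan' hhd' le_rfl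

/-- Vizing's extension lemma: an uncolored edge can be colored after recoloring. -/
lemma vizing_extend (hn : ∀ v : V, H.degree v < n) {C : Sym2 V → Option (Fin n)}
    (hC : Proper C) (hS : Supp H C) {x y : V} (hxy : H.Adj x y) (hnone : C s(x, y) = none) :
    ∃ C' : Sym2 V → Option (Fin n), Proper C' ∧ Supp H C' ∧ ∀ f, (C' f = none ↔ (C f = none ∧ f ≠ s(x, y))) := by
  classical
  obtain ⟨α, hα⟩ := exists_free C x (hn x)
  rcases fan_grow hn hC hxy hnone with
    ⟨L, t, c, hfan, hhd, hlast, hft, hfx⟩ |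
    ⟨L, t, u', β, A, B, hfan, hhd, hlast, hdecL, hAne, hu'β, hftβ⟩
  · -- Case (i): rotate the whole fan and color the last edge directly
    obtain ⟨r1, r2, r3, r4, r5, r6⟩ := rot_spec L C hC hS hfan y t hhd hlast
    have htL : t ∈ L := getLast?_mem hlast
    have hadjt : H.Adj x t := hfan.2.2.1 t htL
    have hfx1 : freeC H (rot C x L) x c := by
      intro u hu hcu
      obtain ⟨u0, hu0, hcu0⟩ := (r4 c).mp ⟨u, hu, hcu⟩
      exact hfx u0 hu0 hcu0
    have htnone : rot C x L s(x, t) = none := (r3 s(x, t)).mpr (Or.inr rfl)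
    have hft1 : freeC H (rot C x L) t c := by
      intro u hu hcu
      by_cases hux : u = x
      · subst hux
        rw [Sym2.eq_swap, htnone] at hcu
        exact absurd hcu (by simp)
      · have heq : rot C x L s(t, u) = C s(t, u) := by
          apply r5
          intro z hz h
          rcases sym2_eq_cases h with ⟨h1, -⟩ | ⟨-, h2⟩
          · exact hadjt.ne' (h1 ▸ rfl)
          · exact hux h2
        rw [heq] at hcu
        exact hft u hu hcu
    obtain ⟨p1, p2, p3⟩ := color_step r1 r2 hadjt hfx1 hft1
    refine ⟨_, p1, p2, ?_⟩
    intro f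
    rw [p3 f, r3 f]
    constructor
    · rintro ⟨h1 | rfl, h2⟩
      · exact h1
      · exact absurd rfl h2
    · rintro ⟨h1, h2⟩
      have hft' : f ≠ s(x, t) := by
        by_cases hty : t = y
        · subst hty; exact h2
        · obtain ⟨c0, hc0⟩ := fan_colored hfan hhd htL hty
          intro h
          rw [h, hc0] at h1
          exact absurd h1 (by simp)
      exact ⟨Or.inl ⟨h1, h2⟩, hft'⟩
  · -- Case (ii)
    have hnd : L.Nodup := hfan.2.1
    have hadjL := hfan.2.2.1
    have hchain := hfan.2.2.2.2
    obtain ⟨w, hw⟩ : ∃ w, A.getLast? = some w := ⟨_, List.getLast?_eq_getLast hAne⟩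
    have hsplitA : A.dropLast ++ [w] = A := List.dropLast_append_getLast? w hw
    have hLdec : L = A.dropLast ++ w :: u' :: B := by
      rw [hdecL]
      calc A ++ u' :: B = (A.dropLast ++ [w]) ++ u' :: B := by rw [hsplitA]
        _ = A.dropLast ++ w :: u' :: B := by rw [List.append_assoc, List.singleton_append]
    have hwA : w ∈ A := getLast?_mem hw
    have hu'L : u' ∈ L := by rw [hdecL]; exact List.mem_append_right _ (by simp)
    have hwL : w ∈ L := by rw [hdecL]; exact List.mem_append_left _ hwA
    have htL : t ∈ L := getLast?_mem hlast
    have hadjw : H.Adj x w := hadjL w hwL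
    have hadjt : H.Adj x t := hadjL t htL
    have hadju' : H.Adj x u' := hadjL u' hu'L
    have hndL : (A ++ u' :: B).Nodup := hdecL ▸ hnd
    have hdisj : ∀ a ∈ A, a ∉ u' :: B :=
      fun a ha hb => (List.disjoint_of_nodup_append hndL) ha hb
    have htuB : t ∈ u' :: B := by
      have hg : L.getLast? = (u' :: B).getLast? := by
        rw [hdecL]
        exact List.getLast?_append_of_ne_nil _ (List.cons_ne_nil _ _)
      exact getLast?_mem (hg ▸ hlast)
    have htA : t ∉ A := fun h => hdisj t h htuB
    have hwt : w ≠ t := fun h => htA (h ▸ hwA)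
    have hheadA : A.head? = some y := by
      cases A with
      | nil => exact absurd rfl hAne
      | cons a A0 =>
        rw [hdecL] at hhd
        simpa using hhd
    have hyA : y ∈ A := by
      cases A with
      | nil => exact absurd rfl hAne
      | cons a A0 =>
        have : a = y := by simpa using hheadA
        rw [← this]; simp
    have hty : t ≠ y := fun h => htA (h ▸ hyA)
    have hfanA : IsFan H C x A := by
      refine ⟨hAne, hndL.sublist (List.sublist_append_left _ _), ?_, ?_, ?_⟩
      · intro z hz
        apply hadjL
        rw [hdecL]
        exact List.mem_append_left _ hz
      · intro y' hy'
        rw [hheadA] at hy'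
        have hyy : y = y' := by simpa using hy'
        subst hyy
        exact hnone
      · have : List.Chain' (fun a b => ∃ c, C s(x, b) = some c ∧ freeC H C a c)
            (A ++ u' :: B) := hdecL ▸ hchain
        exact (List.isChain_append.mp this).1
    have hβw : freeC H C w β := by
      obtain ⟨c0, hc0, hfree0⟩ := chain'_of_decomp hchain hLdec
      have hc0β : c0 = β := by rw [hu'β] at hc0; exact (Option.some.inj hc0).symm
      exact hc0β ▸ hfree0
    -- rotate the prefix fan A
    obtain ⟨q1, q2, q3, q4, q5, q6⟩ := rot_spec A C hC hS hfanA y w hheadA hw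
    have hα1 : freeC H (rot C x A) x α := by
      intro u hu hcu
      obtain ⟨u0, hu0, hcu0⟩ := (q4 α).mp ⟨u, hu, hcu⟩
      exact hα u0 hu0 hcu0
    have hαβ : α ≠ β := by rintro rfl; exact hα u' hadju' hu'β
    have hwnone : rot C x A s(x, w) = none := (q3 _).mpr (Or.inr rfl)
    have hβw1 : freeC H (rot C x A) w β := by
      intro u hu hcu
      by_cases hux : u = x
      · subst hux; rw [Sym2.eq_swap, hwnone] at hcu; exact absurd hcu (by simp)
      · have heq : rot C x A s(w, u) = C s(w, u) := by
          apply q5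
          intro z hz h
          rcases sym2_eq_cases h with ⟨h1, -⟩ | ⟨-, h2⟩
          · exact hadjw.ne' (h1 ▸ rfl)
          · exact hux h2
        rw [heq] at hcu
        exact hβw u hu hcu
    have hβt1 : freeC H (rot C x A) t β := by
      intro u hu hcu
      have heq : rot C x A s(t, u) = C s(t, u) := by
        apply q5
        intro z hz h
        rcases sym2_eq_cases h with ⟨h1, -⟩ | ⟨h1, -⟩
        · exact hadjt.ne' (h1 ▸ rfl)
        · exact htA (h1 ▸ hz)
      rw [heq] at hcu
      exact hftβ u hu hcu
    have hxw : x ≠ w := hadjw.ne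
    have hxt : x ≠ t := hadjt.ne
    have hdeg2 := colGraph_deg2 (H := H) q1 α β
    have h1x := colGraph_deg1 (H := H) (β := β) q1 (Or.inl hα1)
    have h1w := colGraph_deg1 (H := H) (α := α) q1 (Or.inr hβw1)
    have h1t := colGraph_deg1 (H := H) (α := α) q1 (Or.inr hβt1)
    by_cases hreach : (colGraph H (rot C x A) α β).Reachable x w
    · -- Case B: w is reachable; rotate the full fan instead and swap at t
      have hnt1 : ¬(colGraph H (rot C x A) α β).Reachable x t :=
        fun h => three_ends hxw hxt hwt hdeg2 h1x h1w h1t hreach h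
      obtain ⟨r1, r2, r3, r4, r5, r6⟩ := rot_spec L C hC hS hfan y t hhd hlast
      have hα2 : freeC H (rot C x L) x α := by
        intro u hu hcu
        obtain ⟨u0, hu0, hcu0⟩ := (r4 α).mp ⟨u, hu, hcu⟩
        exact hα u0 hu0 hcu0
      have htnone2 : rot C x L s(x, t) = none := (r3 _).mpr (Or.inr rfl)
      have hβt2 : freeC H (rot C x L) t β := by
        intro u hu hcu
        by_cases hux : u = x
        · subst hux; rw [Sym2.eq_swap, htnone2] at hcu; exact absurd hcu (by simp)
        · have heq : rot C x L s(t, u) = C s(t, u) := by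
            apply r5
            intro z hz h
            rcases sym2_eq_cases h with ⟨h1, -⟩ | ⟨-, h2⟩
            · exact hadjt.ne' (h1 ▸ rfl)
            · exact hux h2
          rw [heq] at hcu
          exact hftβ u hu hcu
      have hsub : ∀ u v, (colGraph H (rot C x L) α β).Adj u v →
          (colGraph H (rot C x A) α β).Adj u v ∨ s(u, v) = s(x, w) := by
        rintro u v ⟨huv, hcol⟩
        by_cases hfz : ∀ z ∈ L, s(u, v) ≠ s(x, z)
        · left
          have e2 : rot C x L s(u, v) = C s(u, v) := r5 _ hfz
          have e1 : rot C x A s(u, v) = C s(u, v) := by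
            apply q5
            intro z hz
            apply hfz
            rw [hdecL]
            exact List.mem_append_left _ hz
          refine ⟨huv, ?_⟩
          rw [e1, ← e2]
          exact hcol
        · push_neg at hfz
          obtain ⟨z, hzL, hze⟩ := hfz
          rw [hze] at hcol
          rcases hcol with hcα | hcβ
          · exfalso
            obtain ⟨u0, hu0, hcu0⟩ := (r4 α).mp ⟨z, hadjL z hzL, hcα⟩
            exact hα u0 hu0 hcu0
          · have hzt : z ≠ t := by
              intro h
              rw [h, htnone2] at hcβ
              exact absurd hcβ (by simp)
            obtain ⟨A1, B1, hdec1⟩ := List.append_of_mem hzL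
            cases B1 with
            | nil =>
              exfalso
              rw [hdec1, List.getLast?_concat] at hlast
              exact hzt (Option.some.inj hlast)
            | cons b B1' =>
              have hr6 : rot C x L s(x, z) = C s(x, b) := r6 A1 z b B1' hdec1
              have hcb : C s(x, b) = some β := by rw [← hr6]; exact hcβ
              have hbu : b = u' := by
                by_contra hne
                exact hC x b u' hne β hcb hu'β
              subst hbu
              have e1 : (A1 ++ [z]) ++ b :: B1' = L := by
                rw [hdec1, List.append_assoc, List.singleton_append]
              have e2 : (A.dropLast ++ [w]) ++ b :: B = L := by
                rw [hLdec, List.append_assoc, List.singleton_append]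
              have huniq : A1 ++ [z] = A.dropLast ++ [w] := by
                apply nodup_unique_pred (u := b) (q₁ := B1') (q₂ := B)
                · rw [e1]; exact hnd
                · rw [e1, e2]
              have hzw : z = w := by
                have := congrArg List.getLast? huniq
                rw [List.getLast?_concat, List.getLast?_concat] at this
                exact Option.some.inj this
              right
              rw [hze, hzw]
      have hnt2 : ¬(colGraph H (rot C x L) α β).Reachable x t := by
        intro h
        obtain ⟨p⟩ := h
        exact hnt1 (reach_transfer hsub hreach p)
      have hC3 := swap_proper r1 r2 α β x
      have hS3 := swap_supp r2 α β x
      have hfx3 : freeC H (swapC H (rot C x L) α β x) x β := swap_free_x hαβ hα2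
      have hft3 : freeC H (swapC H (rot C x L) α β x) t β := swap_free_far r2 hnt2 hβt2
      obtain ⟨p1, p2, p3⟩ := color_step hC3 hS3 hadjt hfx3 hft3
      refine ⟨_, p1, p2, ?_⟩
      intro f
      rw [p3 f, swap_none (H := H) (rot C x L) α β x f, r3 f]
      constructor
      · rintro ⟨h1 | rfl, h2⟩
        · exact h1
        · exact absurd rfl h2
      · rintro ⟨h1, h2⟩
        have hft' : f ≠ s(x, t) := by
          obtain ⟨c0, hc0⟩ := fan_colored hfan hhd htL hty
          intro h
          rw [h, hc0] at h1
          exact absurd h1 (by simp)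
        exact ⟨Or.inl ⟨h1, h2⟩, hft'⟩
    · -- Case A: w is not reachable; swap and color s(x,w)
      have hC3 := swap_proper q1 q2 α β x
      have hS3 := swap_supp q2 α β x
      have hfx3 : freeC H (swapC H (rot C x A) α β x) x β := swap_free_x hαβ hα1
      have hfw3 : freeC H (swapC H (rot C x A) α β x) w β := swap_free_far q2 hreach hβw1
      obtain ⟨p1, p2, p3⟩ := color_step hC3 hS3 hadjw hfx3 hfw3
      refine ⟨_, p1, p2, ?_⟩
      intro f
      rw [p3 f, swap_none (H := H) (rot C x A) α β x f, q3 f]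
      constructor
      · rintro ⟨h1 | rfl, h2⟩
        · exact h1
        · exact absurd rfl h2
      · rintro ⟨h1, h2⟩
        have hfw' : f ≠ s(x, w) := by
          by_cases hwy : w = y
          · subst hwy; exact h2
          · obtain ⟨c0, hc0⟩ := fan_colored hfan hhd hwL hwy
            intro h
            rw [h, hc0] at h1
            exact absurd h1 (by simp)
        exact ⟨Or.inl ⟨h1, h2⟩, hfw'⟩

/-- Every graph with all degrees `< n` has a total proper edge coloring with `n` colors. -/
lemma vizing_total (hn : ∀ v : V, H.degree v < n) :
    ∃ C : Sym2 V → Option (Fin n), Proper C ∧ Supp H C ∧ ∀ e ∈ H.edgeSet, C e ≠ none := by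
  classical
  suffices h : ∀ (k : ℕ) (C : Sym2 V → Option (Fin n)), Proper C → Supp H C →
      (H.edgeFinset.filter (fun e => C e = none)).card ≤ k →
      ∃ C' : Sym2 V → Option (Fin n), Proper C' ∧ Supp H C' ∧
        ∀ e ∈ H.edgeSet, C' e ≠ none by
    refine h H.edgeFinset.card (fun _ => none) ?_ ?_ ?_
    · intro v a b hab c h1; exact absurd h1 (by simp)
    · intro e he; exact absurd rfl he
    · exact Finset.card_filter_le _ _
  intro k
  induction k with
  | zero =>
    intro C hC hS hcard
    refine ⟨C, hC, hS, ?_⟩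
    intro e he hnone
    have hmem : e ∈ H.edgeFinset.filter (fun e => C e = none) :=
      Finset.mem_filter.mpr ⟨SimpleGraph.mem_edgeFinset.mpr he, hnone⟩
    have := Finset.card_pos.mpr ⟨e, hmem⟩
    omega
  | succ k ih =>
    intro C hC hS hcard
    by_cases hall : ∀ e ∈ H.edgeFinset, C e ≠ none
    · exact ⟨C, hC, hS, fun e he => hall e (SimpleGraph.mem_edgeFinset.mpr he)⟩
    · push_neg at hall
      obtain ⟨e, he, henone⟩ := hall
      revert he henone
      refine Sym2.inductionOn e ?_
      intro x y he henone
      have hxy : H.Adj x y := by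
        have := SimpleGraph.mem_edgeFinset.mp he
        rwa [SimpleGraph.mem_edgeSet] at this
      obtain ⟨C', hC', hS', hiff⟩ := vizing_extend hn hC hS hxy henone
      apply ih C' hC' hS'
      have hsub : H.edgeFinset.filter (fun f => C' f = none) ⊆
          (H.edgeFinset.filter (fun f => C f = none)).erase s(x, y) := by
        intro f hf
        rw [Finset.mem_filter] at hf
        obtain ⟨hf1, hf2⟩ := hf
        rw [hiff] at hf2
        exact Finset.mem_erase.mpr ⟨hf2.2, Finset.mem_filter.mpr ⟨hf1, hf2.1⟩⟩
      have hmem : s(x, y) ∈ H.edgeFinset.filter (fun f => C f = none) :=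
        Finset.mem_filter.mpr ⟨he, henone⟩
      have hpos := Finset.card_pos.mpr ⟨_, hmem⟩
      calc (H.edgeFinset.filter (fun f => C' f = none)).card
          ≤ ((H.edgeFinset.filter (fun f => C f = none)).erase s(x, y)).card :=
            Finset.card_le_card hsub
        _ = (H.edgeFinset.filter (fun f => C f = none)).card - 1 :=
            Finset.card_erase_of_mem hmem
        _ ≤ k := by omega

end Coloring

end Vizing19

theorem stmt_19 {V : Type*} [Fintype V] [DecidableEq V] (H : SimpleGraph V)
    [DecidableRel H.Adj] :
    ∃ M : Fin (H.maxDegree + 1) → Finset (Sym2 V),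
      (∀ i, M i ⊆ H.edgeFinset) ∧
      (∀ i, ∀ e ∈ M i, ∀ f ∈ M i, e ≠ f → ∀ v : V, ¬(v ∈ e ∧ v ∈ f)) ∧
      (∀ i j, i ≠ j → Disjoint (M i) (M j)) ∧
      (∀ e ∈ H.edgeFinset, ∃ i, e ∈ M i) := by
  classical
  obtain ⟨C, hC, hS, htot⟩ := Vizing19.vizing_total (H := H) (n := H.maxDegree + 1)
    (fun v => Nat.lt_succ_of_le (H.degree_le_maxDegree v))
  refine ⟨fun i => H.edgeFinset.filter (fun e => C e = some i), ?_, ?_, ?_, ?_⟩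
  · intro i; exact Finset.filter_subset _ _
  · intro i e he f hf hef v hv
    obtain ⟨hve, hvf⟩ := hv
    rw [Finset.mem_filter] at he hf
    obtain ⟨a, rfl⟩ := Sym2.mem_iff_exists.mp hve
    obtain ⟨b, rfl⟩ := Sym2.mem_iff_exists.mp hvf
    have hab : a ≠ b := fun h => hef (by rw [h])
    exact hC v a b hab i he.2 hf.2
  · intro i j hij
    rw [Finset.disjoint_left]
    intro e hei hej
    rw [Finset.mem_filter] at hei hej
    rw [hei.2] at hej
    exact hij (Option.some.inj hej.2)
  · intro e he
    have hne : C e ≠ none := htot e (SimpleGraph.mem_edgeFinset.mp he)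
    obtain ⟨i, hi⟩ := Option.ne_none_iff_exists'.mp hne
    exact ⟨i, Finset.mem_filter.mpr ⟨he, hi⟩⟩
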